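/- Let H and K be complex inner product spaces with dim(H) ≥ 2, and let A : H → K be a non-zero additive mapping preserving Euclidean orthogonality. Then there exist a positive real number γ and a real-linear isometry T : H → K such that A = γ T. In particular, A is real-linear and continuous. -/

import Mathlib

open scoped ComplexInnerProductSpace


lemma aux_additive_nonneg_linear (k : ℝ →+ ℝ) (h : ∀ t : ℝ, 0 ≤ t → 0 ≤ k t) :
    ∀ t : ℝ, k t = k 1 * t := by
  have hq : ∀ q : ℚ, k (q : ℝ) = k 1 * (q : ℝ) := by
    intro q
    have := map_ratCast_smul k ℝ ℝ q (1 : ℝ)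
    simpa [smul_eq_mul, mul_comm] using this
  have hmono : Monotone k := by
    intro a b hab
    have h1 : 0 ≤ k (b - a) := h _ (by linarith)
    have h2 : k (b - a) = k b - k a := k.map_sub b a
    linarith
  have hk1 : 0 ≤ k 1 := h 1 zero_le_one
  intro t
  by_contra hne
  rcases lt_or_gt_of_ne hne with hlt | hgt
  · -- k t < k 1 * t
    rcases eq_or_lt_of_le hk1 with h0 | hpos
    · obtain ⟨q, hq1⟩ := exists_rat_lt t
      have := hmono hq1.le
      rw [hq q] at this
      nlinarith
    · have hx : k t / k 1 < t := by
        rw [div_lt_iff₀ hpos]; nlinarith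
      obtain ⟨q, hq1, hq2⟩ := exists_rat_btwn hx
      have h3 := hmono hq2.le
      rw [hq q] at h3
      have : k t < k 1 * q := by
        rw [div_lt_iff₀ hpos] at hq1; nlinarith
      linarith
  · rcases eq_or_lt_of_le hk1 with h0 | hpos
    · obtain ⟨q, hq1⟩ := exists_rat_gt t
      have := hmono hq1.le
      rw [hq q] at this
      nlinarith
    · have hx : t < k t / k 1 := by
        rw [lt_div_iff₀ hpos]; nlinarith
      obtain ⟨q, hq1, hq2⟩ := exists_rat_btwn hx
      have h3 := hmono hq1.le
      rw [hq q] at h3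
      have : k 1 * q < k t := by
        rw [lt_div_iff₀ hpos] at hq2; nlinarith
      linarith


lemma aux_exists_orthonormal_pair {H : Type*} [NormedAddCommGroup H] [InnerProductSpace ℂ H]
    (hdim : 2 ≤ Module.rank ℂ H) :
    ∃ e f : H, ⟪e, e⟫ = 1 ∧ ⟪f, f⟫ = 1 ∧ ⟪e, f⟫ = 0 := by
  obtain ⟨v, hv⟩ : ∃ x : H, x ≠ 0 := by
    rw [← rank_pos_iff_exists_ne_zero (R := ℂ)]
    exact lt_of_lt_of_le (by norm_num) hdim
  set e : H := (‖v‖ : ℂ)⁻¹ • v with he_def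
  have hvnorm : ‖v‖ ≠ 0 := norm_ne_zero_iff.mpr hv
  have hee : ⟪e, e⟫ = 1 := by
    have hne : ‖e‖ = 1 := by
      simp [he_def, norm_smul, hvnorm]
    rw [inner_self_eq_norm_sq_to_K, hne]
    norm_num
  -- span of e is not everything
  have hspan : (Submodule.span ℂ {e} : Submodule ℂ H) ≠ ⊤ := by
    intro htop
    have h1 : Module.rank ℂ H ≤ 1 := by
      have := rank_span_le (R := ℂ) ({e} : Set H)
      rw [htop] at this
      simpa using this
    exact absurd (le_trans hdim h1) (by norm_num)
  obtain ⟨w, hw⟩ : ∃ w : H, w ∉ (Submodule.span ℂ {e} : Submodule ℂ H) := by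
    by_contra hcon
    push_neg at hcon
    exact hspan (Submodule.eq_top_iff'.mpr hcon)
  set w' : H := w - ⟪e, w⟫ • e with hw'_def
  have hew' : ⟪e, w'⟫ = 0 := by
    rw [hw'_def, inner_sub_right, inner_smul_right, hee]; ring
  have hw'ne : w' ≠ 0 := by
    intro h0
    apply hw
    have : w = ⟪e, w⟫ • e := by rwa [hw'_def, sub_eq_zero] at h0
    rw [this]
    exact Submodule.smul_mem _ _ (Submodule.mem_span_singleton_self e)
  refine ⟨e, (‖w'‖ : ℂ)⁻¹ • w', hee, ?_, ?_⟩
  · have h1 : ‖w'‖ ≠ 0 := norm_ne_zero_iff.mpr hw'ne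
    have hn : ‖(‖w'‖ : ℂ)⁻¹ • w'‖ = 1 := by
      simp [norm_smul, h1]
    rw [inner_self_eq_norm_sq_to_K, hn]
    norm_num
  · simp [inner_smul_right, hew']

set_option maxHeartbeats 1000000 in
/-- Every non-zero additive orthogonality preserving map between complex inner
product spaces (with `dim H ≥ 2`) is a positive scalar multiple of a real-linear
isometry; in particular it is real-linear and continuous. -/
theorem additive_orthogonality_preserving_eq_smul_realLinearIsometry
    {H K : Type*} [NormedAddCommGroup H] [InnerProductSpace ℂ H]
    [NormedAddCommGroup K] [InnerProductSpace ℂ K]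
    (hdim : 2 ≤ Module.rank ℂ H)
    (A : H → K) (hA : A ≠ 0)
    (hadd : ∀ x y, A (x + y) = A x + A y)
    (hop : ∀ x y : H, ⟪x, y⟫ = 0 → ⟪A x, A y⟫ = 0) :
    ∃ (γ : ℝ) (T : H →ₗᵢ[ℝ] K), 0 < γ ∧ (∀ x, A x = γ • T x) ∧
      (∀ (r : ℝ) (x : H), A (r • x) = r • A x) ∧ Continuous A := by
  classical
  have hA0 : A 0 = 0 := by
    have h := hadd 0 0
    simp only [add_zero] at h
    exact left_eq_add.mp h
  have hAneg : ∀ x, A (-x) = -A x := by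
    intro x
    have h := hadd x (-x)
    rw [add_neg_cancel, hA0] at h
    exact (neg_eq_of_add_eq_zero_right h.symm).symm
  obtain ⟨e, f, hee, hff, hef⟩ := aux_exists_orthonormal_pair hdim
  -- the key orthogonality relation
  have key : ∀ x y : H, ⟪x, x⟫ = 1 → ⟪y, y⟫ = 1 → ⟪x, y⟫ = 0 →
      ∀ l l' m m' : ℂ, (starRingEnd ℂ) l * m + (starRingEnd ℂ) l' * m' = 0 →
      ⟪A (l • x), A (m • x)⟫ + ⟪A (l' • y), A (m' • y)⟫ = 0 := by
    intro x y hx hy hxy l l' m m' hlm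
    have hyx : ⟪y, x⟫ = 0 := by
      rw [← inner_conj_symm, hxy, map_zero]
    have horth : ⟪l • x + l' • y, m • x + m' • y⟫ = 0 := by
      simp [inner_add_left, inner_add_right, inner_smul_left, inner_smul_right,
        hx, hy, hxy, hyx]
      have hxn : (‖x‖ : ℂ) ^ 2 = 1 := by
        have h : ‖x‖ ^ 2 = 1 := by rw [← inner_self_eq_norm_sq (𝕜 := ℂ), hx]; simp
        exact_mod_cast h
      have hyn : (‖y‖ : ℂ) ^ 2 = 1 := by
        have h : ‖y‖ ^ 2 = 1 := by rw [← inner_self_eq_norm_sq (𝕜 := ℂ), hy]; simp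
        exact_mod_cast h
      linear_combination hlm + m * (starRingEnd ℂ) l * hxn + m' * (starRingEnd ℂ) l' * hyn
    have h2 := hop _ _ horth
    rw [hadd, hadd, inner_add_left, inner_add_right, inner_add_right] at h2
    have hc1 : ⟪A (l • x), A (m' • y)⟫ = 0 := by
      apply hop
      rw [inner_smul_left, inner_smul_right, hxy]
      ring
    have hc2 : ⟪A (l' • y), A (m • x)⟫ = 0 := by
      apply hop
      rw [inner_smul_left, inner_smul_right, hyx]
      ring
    rw [hc1, hc2] at h2
    linear_combination h2
  -- the auxiliary function g
  set g : ℂ → ℂ := fun b => ⟪A e, A (b • e)⟫ with hg_def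
  have hAnegsmul : ∀ (b : ℂ) (z : H), A (-b • z) = -A (b • z) := by
    intro b z
    rw [neg_smul, hAneg]
  -- transfer along orthogonal unit vectors
  have transfer : ∀ y : H, ⟪y, y⟫ = 1 → ⟪y, e⟫ = 0 →
      ∀ l m : ℂ, ⟪A (l • y), A (m • y)⟫ = ⟪A (l • e), A (m • e)⟫ := by
    intro y hy hye l m
    have h := key y e hy hee hye l l m (-m) (by ring)
    rw [hAnegsmul] at h
    rw [inner_neg_right] at h
    linear_combination h
  -- F_e(l, m) = g (conj l * m)
  have hFe : ∀ l m : ℂ, ⟪A (l • e), A (m • e)⟫ = g ((starRingEnd ℂ) l * m) := by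
    intro l m
    have h1 := key e f hee hff hef l 1 m (-((starRingEnd ℂ) l * m)) (by simp)
    rw [hAnegsmul] at h1
    rw [inner_neg_right] at h1
    have h2 := key f e hff hee (by rw [← inner_conj_symm, hef, map_zero])
      1 1 ((starRingEnd ℂ) l * m) (-((starRingEnd ℂ) l * m)) (by simp)
    rw [hAnegsmul] at h2
    rw [inner_neg_right] at h2
    simp only [one_smul] at h1 h2
    rw [hg_def]
    simp only []
    linear_combination h1 + h2
  have hgadd : ∀ a b : ℂ, g (a + b) = g a + g b := by
    intro a b
    rw [hg_def]
    simp only []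
    rw [add_smul, hadd, inner_add_right]
  have hgconj : ∀ b : ℂ, g ((starRingEnd ℂ) b) = (starRingEnd ℂ) (g b) := by
    intro b
    have h1 : ⟪A ((1:ℂ) • e), A (b • e)⟫ = g b := by
      rw [hFe]; simp
    have h2 : ⟪A (b • e), A ((1:ℂ) • e)⟫ = g ((starRingEnd ℂ) b) := by
      rw [hFe]; simp
    rw [← h1, ← h2, inner_conj_symm]
  have hgnonneg : ∀ t : ℝ, 0 ≤ t → ∃ s : ℝ, 0 ≤ s ∧ g t = s := by
    intro t ht
    have h1 : ((Real.sqrt t : ℂ)) * (Real.sqrt t : ℂ) = (t : ℂ) := by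
      rw [← Complex.ofReal_mul, Real.mul_self_sqrt ht]
    have h2 : ⟪A ((Real.sqrt t : ℂ) • e), A ((Real.sqrt t : ℂ) • e)⟫ = g t := by
      rw [hFe]
      congr 1
      rw [Complex.conj_ofReal, h1]
    refine ⟨‖A ((Real.sqrt t : ℂ) • e)‖ ^ 2, sq_nonneg _, ?_⟩
    rw [← h2, inner_self_eq_norm_sq_to_K]
    norm_num
  -- package re ∘ g on reals as an additive monoid hom
  have hknn : ∀ t : ℝ, 0 ≤ t → 0 ≤ (g (t : ℂ)).re := by
    intro t ht
    obtain ⟨s, hs, hgs⟩ := hgnonneg t ht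
    simp [hgs, hs]
  have hklin := aux_additive_nonneg_linear
    (AddMonoidHom.mk' (fun t : ℝ => (g (t : ℂ)).re) (by
      intro a b
      show (g ((a + b : ℝ) : ℂ)).re = (g (a : ℂ)).re + (g (b : ℂ)).re
      rw [show ((a + b : ℝ) : ℂ) = (a : ℂ) + (b : ℂ) by push_cast; ring, hgadd,
        Complex.add_re])) (by intro t ht; exact hknn t ht)
  simp only [AddMonoidHom.mk'_apply] at hklin
  set c : ℝ := (g (((1 : ℝ) : ℂ))).re with hc_def
  have hcnn : 0 ≤ c := hknn 1 zero_le_one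
  -- the norm identity
  have hnorm : ∀ z : H, ‖A z‖ ^ 2 = c * ‖z‖ ^ 2 := by
    intro z
    set a : ℂ := ⟪e, z⟫ with ha_def
    set w : H := z - a • e with hw_def
    have hew : ⟪e, w⟫ = 0 := by
      rw [hw_def, inner_sub_right, inner_smul_right, hee]
      ring
    have hz : a • e + w = z := by rw [hw_def]; abel
    have hAz : A z = A (a • e) + A w := by rw [← hz, hadd]
    have horthA : ⟪A (a • e), A w⟫ = 0 := by
      apply hop
      rw [inner_smul_left, hew]
      ring
    have horthAr : RCLike.re ⟪A (a • e), A w⟫ = 0 := by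
      rw [horthA]; simp
    have horthr : RCLike.re ⟪a • e, w⟫ = 0 := by
      rw [inner_smul_left, hew]; simp
    -- norm of A (a • e)
    have hne : ‖e‖ ^ 2 = 1 := by
      rw [← inner_self_eq_norm_sq (𝕜 := ℂ), hee]
      simp
    have h1 : ‖A (a • e)‖ ^ 2 = c * Complex.normSq a := by
      have h2 : ⟪A (a • e), A (a • e)⟫ = g ((Complex.normSq a : ℝ) : ℂ) := by
        rw [hFe]
        congr 1
        exact Complex.normSq_eq_conj_mul_self.symm
      have h3 : ‖A (a • e)‖ ^ 2 = (g ((Complex.normSq a : ℝ) : ℂ)).re := by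
        rw [← h2]
        exact (inner_self_eq_norm_sq (𝕜 := ℂ) _).symm
      rw [h3, hklin (Complex.normSq a)]
    -- norm of A w
    have h4 : ‖A w‖ ^ 2 = c * ‖w‖ ^ 2 := by
      rcases eq_or_ne w 0 with h0 | h0
      · rw [h0, hA0]
        simp
      · have hwn : ‖w‖ ≠ 0 := norm_ne_zero_iff.mpr h0
        set y : H := (‖w‖ : ℂ)⁻¹ • w with hy_def
        have hyn : ‖y‖ = 1 := by
          rw [hy_def, norm_smul]
          simp [hwn]
        have hyy : ⟪y, y⟫ = 1 := by
          rw [inner_self_eq_norm_sq_to_K, hyn]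
          norm_num
        have hye : ⟪y, e⟫ = 0 := by
          rw [hy_def, inner_smul_left]
          have : ⟪w, e⟫ = 0 := by
            rw [← inner_conj_symm, hew, map_zero]
          rw [this, mul_zero]
        have hwy : (‖w‖ : ℂ) • y = w := by
          rw [hy_def, smul_smul]
          rw [mul_inv_cancel₀ (Complex.ofReal_ne_zero.mpr hwn), one_smul]
        have h5 : ⟪A w, A w⟫ = g (((‖w‖ ^ 2 : ℝ) : ℂ)) := by
          conv_lhs => rw [← hwy]
          rw [transfer y hyy hye, hFe, Complex.conj_ofReal]
          congr 1
          push_cast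
          ring
        have h6 : ‖A w‖ ^ 2 = (g (((‖w‖ ^ 2 : ℝ) : ℂ))).re := by
          rw [← h5]
          exact (inner_self_eq_norm_sq (𝕜 := ℂ) _).symm
        rw [h6, hklin (‖w‖ ^ 2)]
    -- combine
    have h7 : ‖A z‖ ^ 2 = ‖A (a • e)‖ ^ 2 + ‖A w‖ ^ 2 := by
      rw [hAz, norm_add_sq (𝕜 := ℂ), horthAr]
      ring
    have h8 : ‖z‖ ^ 2 = Complex.normSq a + ‖w‖ ^ 2 := by
      rw [← hz, norm_add_sq (𝕜 := ℂ), horthr, norm_smul]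
      have : ‖a‖ ^ 2 = Complex.normSq a := by
        rw [Complex.sq_norm]
      nlinarith [this, hne]
    rw [h7, h1, h4, h8]
    ring
  -- positivity of c
  have hcpos : 0 < c := by
    rcases eq_or_lt_of_le hcnn with h0 | h
    · exfalso
      apply hA
      funext z
      have := hnorm z
      rw [← h0] at this
      simp only [zero_mul, pow_eq_zero_iff, norm_eq_zero] at this
      simpa using this
    · exact h
  -- the scaling factor
  set γ : ℝ := Real.sqrt c with hγ_def
  have hγpos : 0 < γ := Real.sqrt_pos.mpr hcpos
  have hγsq : γ ^ 2 = c := Real.sq_sqrt hcnn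
  have hnorm' : ∀ z : H, ‖A z‖ = γ * ‖z‖ := by
    intro z
    have h := hnorm z
    have h2 : ‖A z‖ = Real.sqrt (c * ‖z‖ ^ 2) := by
      rw [← h, Real.sqrt_sq (norm_nonneg _)]
    rw [h2, Real.sqrt_mul hcnn, Real.sqrt_sq (norm_nonneg _)]
  have hAsub : ∀ u v : H, A u - A v = A (u - v) := by
    intro u v
    have h := hadd (u - v) v
    rw [sub_add_cancel] at h
    rw [h]
    abel
  -- real homogeneity
  have hRH : ∀ (r : ℝ) (z : H), A (r • z) = r • A z := by
    intro r z
    have e1 : ‖A (r • z)‖ ^ 2 = γ ^ 2 * (r ^ 2 * ‖z‖ ^ 2) := by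
      rw [hnorm', norm_smul, Real.norm_eq_abs, mul_pow, mul_pow, sq_abs]
    have e2 : ‖A z‖ ^ 2 = γ ^ 2 * ‖z‖ ^ 2 := by
      rw [hnorm', mul_pow]
    have e3 : ‖A (r • z) - A z‖ ^ 2 = γ ^ 2 * ((r - 1) ^ 2 * ‖z‖ ^ 2) := by
      rw [hAsub, show r • z - z = (r - 1) • z by rw [sub_smul, one_smul],
        hnorm', norm_smul, Real.norm_eq_abs, mul_pow, mul_pow, sq_abs]
    have e4 : ‖A (r • z) - A z‖ ^ 2
        = ‖A (r • z)‖ ^ 2 - 2 * RCLike.re ⟪A (r • z), A z⟫ + ‖A z‖ ^ 2 :=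
      norm_sub_sq (𝕜 := ℂ) _ _
    have e5 : ‖A (r • z) - r • A z‖ ^ 2
        = ‖A (r • z)‖ ^ 2 - 2 * RCLike.re ⟪A (r • z), r • A z⟫ + ‖r • A z‖ ^ 2 :=
      norm_sub_sq (𝕜 := ℂ) _ _
    have e6 : RCLike.re ⟪A (r • z), r • A z⟫ = r * RCLike.re ⟪A (r • z), A z⟫ := by
      have hc : ((r : ℂ)) • A z = r • A z := Complex.coe_smul r (A z)
      calc RCLike.re ⟪A (r • z), r • A z⟫
          = RCLike.re ⟪A (r • z), ((r : ℂ)) • A z⟫ := by rw [hc]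
        _ = RCLike.re ((r : ℂ) * ⟪A (r • z), A z⟫) := by rw [inner_smul_right]
        _ = r * RCLike.re ⟪A (r • z), A z⟫ := by simp
    have e7 : ‖r • A z‖ ^ 2 = r ^ 2 * (γ ^ 2 * ‖z‖ ^ 2) := by
      rw [norm_smul, Real.norm_eq_abs, mul_pow, sq_abs, e2]
    have e8 : ‖A (r • z) - r • A z‖ ^ 2 = 0 := by
      rw [e5, e6, e7, e1]
      nlinarith [e3, e4, e1, e2]
    rw [← sub_eq_zero, ← norm_eq_zero]
    exact sq_eq_zero_iff.mp e8
  -- build the isometry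
  have hγne : γ ≠ 0 := ne_of_gt hγpos
  refine ⟨γ, ⟨⟨⟨fun x => γ⁻¹ • A x, ?_⟩, ?_⟩, ?_⟩, hγpos, ?_, hRH, ?_⟩
  · intro x y
    simp only [hadd, smul_add]
  · intro r x
    simp only [RingHom.id_apply]
    rw [hRH]
    rw [smul_comm]
  · intro x
    simp only [LinearMap.coe_mk, AddHom.coe_mk]
    rw [norm_smul, hnorm', Real.norm_eq_abs, abs_of_pos (inv_pos.mpr hγpos)]
    field_simp
  · intro x
    simp only [LinearIsometry.coe_mk, LinearMap.coe_mk, AddHom.coe_mk]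
    rw [smul_smul, mul_inv_cancel₀ hγne, one_smul]
  · have hAeq : A = fun x => γ • (γ⁻¹ • A x) := by
      funext x
      rw [smul_smul, mul_inv_cancel₀ hγne, one_smul]
    have hT : Continuous fun x : H => γ⁻¹ • A x :=
      (⟨⟨⟨fun x => γ⁻¹ • A x, by intro x y; simp only [hadd, smul_add]⟩,
        by intro r x; simp only [RingHom.id_apply]; rw [hRH, smul_comm]⟩,
        by intro x; simp only [LinearMap.coe_mk, AddHom.coe_mk];
           rw [norm_smul, hnorm', Real.norm_eq_abs, abs_of_pos (inv_pos.mpr hγpos)];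
           field_simp⟩ : H →ₗᵢ[ℝ] K).continuous
    rw [hAeq]
    exact hT.const_smul γ
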